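/- arXiv:1904.06757 — 5 statements merged into one kernel-verified Lean document; each statement's English description precedes it below -/
import Mathlib

section
/- With power demand D(P) = d·(a - bP)^{1/β} (so g_k(P) = β^k·(P̄ - P) with P̄ = a/b), the unique solution of P - C = Σ_k 1'A^{k-1}1 · g_k(P) is P* = (C + P̄·B^β)/(1 + B^β), where B^β = Σ_{k=1}^n β^k·1'A^{k-1}1, and the individual price of firm i is p_i* = c_i + (B_i^β/(1 + B^β))·(P̄ - C) where B_i^β = Σ_{k=1}^n β^k·e_i'A^{k-1}1. -/
/-- With power demand (g_k(P) = β^k (P̄ - P)), the unique solution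
of P - C = Σ_k (1'A^{k-1}1) g_k(P) is P* = (C + P̄ B^β)/(1 + B^β), where
B^β = Σ_{k=1}^n β^k 1'A^{k-1}1, and the individual price of firm i is
p_i* = c_i + (B_i^β/(1 + B^β))(P̄ - C), B_i^β = Σ_k β^k e_i'A^{k-1}1. -/
theorem power_demand_equilibrium
    (n : ℕ) (hn : 1 ≤ n) (A : Matrix (Fin n) (Fin n) ℝ)
    (h01 : ∀ i j, A i j = 0 ∨ A i j = 1)
    (β Pbar C : ℝ) (hβ : 0 < β) (hC : 0 ≤ C) (hCP : C < Pbar)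
    (c : Fin n → ℝ)
    (Bβ : ℝ) (hBβ : Bβ = ∑ k ∈ Finset.Icc 1 n, β ^ k * ∑ i, ∑ j, (A ^ (k - 1)) i j)
    (Bi : Fin n → ℝ)
    (hBi : ∀ i, Bi i = ∑ k ∈ Finset.Icc 1 n, β ^ k * ∑ j, (A ^ (k - 1)) i j)
    (Pstar : ℝ) (hPstar : Pstar = (C + Pbar * Bβ) / (1 + Bβ)) :
    (Pstar - C = ∑ k ∈ Finset.Icc 1 n,
        (∑ i, ∑ j, (A ^ (k - 1)) i j) * (β ^ k * (Pbar - Pstar))) ∧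
    (∀ P : ℝ, P - C = ∑ k ∈ Finset.Icc 1 n,
        (∑ i, ∑ j, (A ^ (k - 1)) i j) * (β ^ k * (Pbar - P)) → P = Pstar) ∧
    (∀ i : Fin n,
      c i + ∑ k ∈ Finset.Icc 1 n,
          (∑ j, (A ^ (k - 1)) i j) * (β ^ k * (Pbar - Pstar))
        = c i + (Bi i / (1 + Bβ)) * (Pbar - C)) := by
  have hApow : ∀ (m : ℕ) (i j : Fin n), 0 ≤ (A ^ m) i j := by
    intro m
    induction m with
    | zero =>
      intro i j
      simp only [pow_zero, Matrix.one_apply]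
      split <;> norm_num
    | succ m ih =>
      intro i j
      rw [pow_succ, Matrix.mul_apply]
      apply Finset.sum_nonneg
      intro l _
      apply mul_nonneg (ih i l)
      rcases h01 l j with h | h <;> rw [h] <;> norm_num
  have hBβ0 : 0 ≤ Bβ := by
    rw [hBβ]
    apply Finset.sum_nonneg
    intro k _
    apply mul_nonneg (le_of_lt (pow_pos hβ k))
    exact Finset.sum_nonneg fun i _ => Finset.sum_nonneg fun j _ => hApow _ i j
  have hden : (1 : ℝ) + Bβ ≠ 0 := by positivity
  have key : ∀ P : ℝ, (∑ k ∈ Finset.Icc 1 n,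
      (∑ i, ∑ j, (A ^ (k - 1)) i j) * (β ^ k * (Pbar - P))) = Bβ * (Pbar - P) := by
    intro P
    rw [hBβ, Finset.sum_mul]
    apply Finset.sum_congr rfl
    intro k _
    ring
  have hPs : Pbar - Pstar = (Pbar - C) / (1 + Bβ) := by
    rw [hPstar]
    field_simp
    ring
  refine ⟨?_, ?_, ?_⟩
  · rw [key, hPstar]
    field_simp
    ring
  · intro P hP
    rw [key] at hP
    rw [hPstar]
    field_simp
    linarith [hP]
  · intro i
    have : (∑ k ∈ Finset.Icc 1 n,
        (∑ j, (A ^ (k - 1)) i j) * (β ^ k * (Pbar - Pstar))) = Bi i * (Pbar - Pstar) := by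
      rw [hBi, Finset.sum_mul]
      apply Finset.sum_congr rfl
      intro k _
      ring
    rw [this, hPs]
    field_simp
end

section
/- Suppose g₁, ..., g_n: (0, P̄) → ℝ are nonnegative weakly decreasing functions with g₁ strictly decreasing, and C ≥ 0. If weights (w_k) and (v_k) of two networks satisfy w_k ≥ v_k for all k and w_j > v_j for some j with g_j > 0, then the unique solutions P_A of P - C = Σ_k w_k g_k(P) and P_B of P - C = Σ_k v_k g_k(P) satisfy P_A ≥ P_B, with strict inequality if g_j(P_B) > 0. (Magnified multiple-marginalization: more influences raise the final price.) -/
/-- Magnified multiple-marginalization: with g_k nonnegative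
weakly decreasing on (0, P̄), g₁ strictly decreasing, C ≥ 0, and network
weights w ≥ v pointwise, the unique solutions P_A, P_B of the respective
fixed-point equations satisfy P_A ≥ P_B, strictly if w_j > v_j at some j with
g_j(P_B) > 0. -/
theorem magnified_marginalization
    (Pbar : ℝ) (hPbar : 0 < Pbar) (n : ℕ) (hn : 1 ≤ n)
    (gs : ℕ → ℝ → ℝ)
    (hpos : ∀ k ∈ Finset.Icc 1 n, ∀ P ∈ Set.Ioo (0 : ℝ) Pbar, 0 ≤ gs k P)
    (hanti : ∀ k ∈ Finset.Icc 1 n, AntitoneOn (gs k) (Set.Ioo (0 : ℝ) Pbar))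
    (hstrict : StrictAntiOn (gs 1) (Set.Ioo (0 : ℝ) Pbar))
    (C : ℝ) (hC : 0 ≤ C)
    (w v : ℕ → ℝ)
    (hwpos : ∀ k, 0 ≤ v k) (hwv : ∀ k, v k ≤ w k)
    (PA PB : ℝ) (hPAmem : PA ∈ Set.Ioo (0 : ℝ) Pbar) (hPBmem : PB ∈ Set.Ioo (0 : ℝ) Pbar)
    (hPA : PA - C = ∑ k ∈ Finset.Icc 1 n, w k * gs k PA)
    (hPB : PB - C = ∑ k ∈ Finset.Icc 1 n, v k * gs k PB) :
    PB ≤ PA ∧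
    (∀ j ∈ Finset.Icc 1 n, v j < w j → 0 < gs j PB → PB < PA) := by
  have hle : PB ≤ PA := by
    by_contra h
    push_neg at h
    have hsum : ∑ k ∈ Finset.Icc 1 n, v k * gs k PB ≤
        ∑ k ∈ Finset.Icc 1 n, w k * gs k PA := by
      refine Finset.sum_le_sum fun k hk => ?_
      have h1 : gs k PB ≤ gs k PA := hanti k hk hPAmem hPBmem h.le
      have h2 : 0 ≤ gs k PA := hpos k hk PA hPAmem
      calc v k * gs k PB ≤ v k * gs k PA := by
            exact mul_le_mul_of_nonneg_left h1 (hwpos k)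
        _ ≤ w k * gs k PA := mul_le_mul_of_nonneg_right (hwv k) h2
    linarith [hPA, hPB]
  refine ⟨hle, fun j hj hvw hg => ?_⟩
  rcases lt_or_eq_of_le hle with h | h
  · exact h
  · exfalso
    have hsum : ∑ k ∈ Finset.Icc 1 n, v k * gs k PB <
        ∑ k ∈ Finset.Icc 1 n, w k * gs k PB := by
      refine Finset.sum_lt_sum (fun k hk => ?_) ⟨j, hj, ?_⟩
      · exact mul_le_mul_of_nonneg_right (hwv k) (hpos k hk PB hPBmem)
      · exact mul_lt_mul_of_pos_right hvw hg
    rw [h] at hsum hPB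
    linarith [hPA, hPB]
end

section
/- Let A be the adjacency matrix of an acyclic directed graph on n vertices, and let g_k(P*) ≥ 0 for all k. If e_i'A^{k-1}1 ≥ e_j'A^{k-1}1 for all k = 1,...,n with strict inequality for some k at which g_k(P*) > 0, then I_i(A) > I_j(A). In particular, if a_{ij} = 1 (i influences j) and A is transitive (A ≥ A² entrywise), then e_i'A^{k-1}1 ≥ e_j'A^{k-1}1 for all k with strict inequality at k = 2, hence I_i(A) > I_j(A) whenever g₂(P*) > 0. -/
/-- For an acyclic transitive 0-1 adjacency matrix A and
nonnegative weights g_k(P*): dominance of path counts of i over j (strict at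
some k with positive weight) implies I_i(A) > I_j(A); and if i influences j
then i's path counts dominate j's with strict inequality at k = 2, hence
I_i(A) > I_j(A) whenever g₂(P*) > 0. -/
theorem influentiality_dominance
    (n : ℕ) (A : Matrix (Fin n) (Fin n) ℝ)
    (h01 : ∀ i j, A i j = 0 ∨ A i j = 1)
    (hdiag : ∀ i, A i i = 0)
    (hacyc : A ^ n = 0)
    (htrans : ∀ i j, (A * A) i j ≤ A i j)
    (g : ℕ → ℝ) (hg : ∀ k, 0 ≤ g k)
    (I : Fin n → ℝ)
    (hI : ∀ i, I i = ∑ k ∈ Finset.Icc 1 n, (∑ j, (A ^ (k - 1)) i j) * g k) :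
    (∀ i j : Fin n,
      (∀ k ∈ Finset.Icc 1 n,
        (∑ l, (A ^ (k - 1)) j l) ≤ ∑ l, (A ^ (k - 1)) i l) →
      (∃ k ∈ Finset.Icc 1 n,
        (∑ l, (A ^ (k - 1)) j l) < (∑ l, (A ^ (k - 1)) i l) ∧ 0 < g k) →
      I j < I i) ∧
    (∀ i j : Fin n, A i j = 1 →
      (∀ k ∈ Finset.Icc 1 n,
        (∑ l, (A ^ (k - 1)) j l) ≤ ∑ l, (A ^ (k - 1)) i l) ∧
      (∑ l, (A ^ (2 - 1)) j l) < (∑ l, (A ^ (2 - 1)) i l) ∧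
      (0 < g 2 → I j < I i)) := by
  -- Nonnegativity of entries of A
  have hA0 : ∀ p q, 0 ≤ A p q := by
    intro p q; rcases h01 p q with h | h <;> simp [h]
  -- Nonnegativity of entries of powers of A
  have hpow : ∀ m p q, 0 ≤ (A ^ m) p q := by
    intro m
    induction m with
    | zero => intro p q; simp [Matrix.one_apply]; positivity
    | succ m ih =>
      intro p q
      rw [pow_succ, Matrix.mul_apply]
      exact Finset.sum_nonneg fun r _ => mul_nonneg (ih p r) (hA0 r q)
  -- Part 1
  have part1 : ∀ i j : Fin n,
      (∀ k ∈ Finset.Icc 1 n,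
        (∑ l, (A ^ (k - 1)) j l) ≤ ∑ l, (A ^ (k - 1)) i l) →
      (∃ k ∈ Finset.Icc 1 n,
        (∑ l, (A ^ (k - 1)) j l) < (∑ l, (A ^ (k - 1)) i l) ∧ 0 < g k) →
      I j < I i := by
    intro i j hle ⟨k0, hk0, hlt, hgk⟩
    rw [hI i, hI j]
    refine Finset.sum_lt_sum (fun k hk => mul_le_mul_of_nonneg_right (hle k hk) (hg k)) ?_
    exact ⟨k0, hk0, mul_lt_mul_of_pos_right hlt hgk⟩
  refine ⟨part1, fun i j hij => ?_⟩
  -- Row of i dominates row of j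
  have hrow : ∀ l, A j l ≤ A i l := by
    intro l
    have h1 : A j l = A i j * A j l := by rw [hij, one_mul]
    have h2 : A i j * A j l ≤ (A * A) i l := by
      rw [Matrix.mul_apply]
      exact Finset.single_le_sum (fun r _ => mul_nonneg (hA0 i r) (hA0 r l))
        (Finset.mem_univ j)
    calc A j l = A i j * A j l := h1
      _ ≤ (A * A) i l := h2
      _ ≤ A i l := htrans i l
  -- Row sums of powers dominate for positive powers
  have hsum : ∀ m : ℕ, (∑ l, (A ^ (m + 1)) j l) ≤ ∑ l, (A ^ (m + 1)) i l := by
    intro m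
    have key : ∀ p : Fin n, (∑ l, (A ^ (m + 1)) p l)
        = ∑ q, A p q * ∑ l, (A ^ m) q l := by
      intro p
      rw [pow_succ']
      simp only [Matrix.mul_apply]
      rw [Finset.sum_comm]
      exact Finset.sum_congr rfl fun q _ => by rw [Finset.mul_sum]
    rw [key i, key j]
    refine Finset.sum_le_sum fun q _ => mul_le_mul_of_nonneg_right (hrow q) ?_
    exact Finset.sum_nonneg fun l _ => hpow m q l
  have hle : ∀ k ∈ Finset.Icc 1 n,
      (∑ l, (A ^ (k - 1)) j l) ≤ ∑ l, (A ^ (k - 1)) i l := by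
    intro k hk
    rcases eq_or_lt_of_le (Finset.mem_Icc.mp hk).1 with h | h
    · rw [← h]; simp [Matrix.one_apply]
    · obtain ⟨m, hm⟩ : ∃ m, k - 1 = m + 1 := ⟨k - 2, by omega⟩
      rw [hm]; exact hsum m
  -- Strict inequality at k = 2
  have hij' : i ≠ j := by
    intro h; rw [h, hdiag] at hij; norm_num at hij
  have hstrict : (∑ l, (A ^ (2 - 1)) j l) < (∑ l, (A ^ (2 - 1)) i l) := by
    simp only [show (2:ℕ) - 1 = 1 from rfl, pow_one]
    refine Finset.sum_lt_sum (fun l _ => hrow l) ⟨j, Finset.mem_univ j, ?_⟩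
    rw [hdiag j, hij]; norm_num
  have hn2 : 2 ≤ n := by
    by_contra h
    interval_cases n
    · exact i.elim0
    · exact hij' (Subsingleton.elim i j)
  refine ⟨hle, hstrict, fun hg2 => part1 i j hle ⟨2, ?_, hstrict, hg2⟩⟩
  exact Finset.mem_Icc.mpr ⟨one_le_two, hn2⟩
end

section
/- For the demand function D(P) = d·e^{√(2(a - bP))/b} with d, a, b > 0, defined for P < a/b, the function g(P) = -D(P)/D'(P) equals √(2(a - bP)), and the recursion g₂(P) = -g₁'(P)·g(P) yields g₂(P) = b and g_k(P) = 0 for all k > 2. Hence the influentiality I_i(A) = √(2(a - bP*)) + b·(e_i'A·1) is an affine function of the out-degree of vertex i. -/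
/-- For D(P) = d e^{√(2(a - bP))/b} on (0, a/b) with d, a, b > 0,
g(P) = -D(P)/D'(P) equals √(2(a - bP)), g₂ ≡ b and g_k ≡ 0 for k > 2 on the
domain; hence the influentiality I_i(A) = √(2(a - bP*)) + b·(out-degree of i)
is affine in the out-degree. -/
theorem degree_centrality_demand
    (d a b : ℝ) (hd : 0 < d) (ha : 0 < a) (hb : 0 < b)
    (D g : ℝ → ℝ)
    (hD : D = fun P => d * Real.exp (Real.sqrt (2 * (a - b * P)) / b))
    (hg : g = fun P => -D P / deriv D P)
    (gs : ℕ → ℝ → ℝ)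
    (hgs1 : gs 1 = g)
    (hgsrec : ∀ k : ℕ, 1 ≤ k → gs (k + 1) = fun P => -(deriv (gs k) P) * g P)
    (n : ℕ) (hn : 2 ≤ n) (A : Matrix (Fin n) (Fin n) ℝ)
    (h01 : ∀ i j, A i j = 0 ∨ A i j = 1) :
    (∀ P ∈ Set.Ioo (0 : ℝ) (a / b),
      gs 1 P = Real.sqrt (2 * (a - b * P)) ∧
      gs 2 P = b ∧
      ∀ k : ℕ, 2 < k → gs k P = 0) ∧
    (∀ Pstar ∈ Set.Ioo (0 : ℝ) (a / b), ∀ i : Fin n,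
      ∑ k ∈ Finset.Icc 1 n, (∑ j, (A ^ (k - 1)) i j) * gs k Pstar
        = Real.sqrt (2 * (a - b * Pstar)) + b * ∑ j, A i j) := by
  set S : Set ℝ := Set.Iio (a / b) with hS
  have hSopen : IsOpen S := isOpen_Iio
  set s : ℝ → ℝ := fun P => Real.sqrt (2 * (a - b * P)) with hsdef
  have hu : ∀ P ∈ S, 0 < 2 * (a - b * P) := by
    intro P hP
    have : b * P < a := by
      have := (lt_div_iff₀ hb).mp hP
      linarith [this]
    linarith
  have hspos : ∀ P ∈ S, 0 < s P := fun P hP => Real.sqrt_pos.mpr (hu P hP)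
  -- derivative of s
  have hsderiv : ∀ P ∈ S, HasDerivAt s (-b / s P) P := by
    intro P hP
    have h1 : HasDerivAt (fun P : ℝ => 2 * (a - b * P)) (2 * (-b)) P := by
      have : HasDerivAt (fun P : ℝ => a - b * P) (-b) P := by
        simpa using ((hasDerivAt_id P).const_mul b).const_sub a
      simpa using this.const_mul 2
    have h2 := (Real.hasDerivAt_sqrt (ne_of_gt (hu P hP))).comp P h1
    have hsne : s P ≠ 0 := ne_of_gt (hspos P hP)
    have h3 : HasDerivAt s (1 / (2 * s P) * (2 * -b)) P := h2
    have h4 : 1 / (2 * s P) * (2 * -b) = -b / s P := by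
      field_simp
    exact h4 ▸ h3
  -- derivative of D
  have hDderiv : ∀ P ∈ S, HasDerivAt D (D P * (-1 / s P)) P := by
    intro P hP
    have hsne : s P ≠ 0 := ne_of_gt (hspos P hP)
    have h1 : HasDerivAt (fun P => s P / b) (-b / s P / b) P :=
      (hsderiv P hP).div_const b
    have h2 : HasDerivAt (fun P => d * Real.exp (s P / b))
        (d * (Real.exp (s P / b) * (-b / s P / b))) P := (h1.exp).const_mul d
    have hfun : D = fun P => d * Real.exp (s P / b) := hD
    rw [hfun]
    convert h2 using 1
    show d * Real.exp (s P / b) * (-1 / s P) = _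
    field_simp
  have hDpos : ∀ P, 0 < D P := by
    intro P; rw [hD]; positivity
  -- g = s on S
  have hgS : ∀ P ∈ S, g P = s P := by
    intro P hP
    have hd1 := (hDderiv P hP).deriv
    have hsne : s P ≠ 0 := ne_of_gt (hspos P hP)
    have hDne : D P ≠ 0 := ne_of_gt (hDpos P)
    rw [hg]
    simp only [hd1]
    field_simp
  have hgEq : ∀ P ∈ S, g =ᶠ[nhds P] s := by
    intro P hP
    filter_upwards [hSopen.mem_nhds hP] with Q hQ using hgS Q hQ
  -- gs 2 = b on S
  have hgs2 : ∀ P ∈ S, gs 2 P = b := by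
    intro P hP
    have hrec := hgsrec 1 le_rfl
    have hderiv : deriv (gs 1) P = -b / s P := by
      rw [hgs1, (hgEq P hP).deriv_eq, (hsderiv P hP).deriv]
    have hsne : s P ≠ 0 := ne_of_gt (hspos P hP)
    simp only [hrec, hderiv, hgS P hP]
    field_simp
  -- gs k = 0 for k > 2 on S
  have hgs0 : ∀ k : ℕ, 2 < k → ∀ P ∈ S, gs k P = 0 := by
    intro k hk
    induction k with
    | zero => omega
    | succ m ih =>
      intro P hP
      rcases Nat.lt_or_ge 2 m with hm | hm
      · -- m > 2, gs m = 0 near P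
        have heq : gs m =ᶠ[nhds P] (fun _ => (0:ℝ)) := by
          filter_upwards [hSopen.mem_nhds hP] with Q hQ using ih hm Q hQ
        have hder : deriv (gs m) P = 0 := by
          rw [heq.deriv_eq]; simp
        simp only [hgsrec m (by omega)]; rw [hder]; ring
      · -- m = 2
        have hm2 : m = 2 := by omega
        subst hm2
        have heq : gs 2 =ᶠ[nhds P] (fun _ => b) := by
          filter_upwards [hSopen.mem_nhds hP] with Q hQ using hgs2 Q hQ
        have hder : deriv (gs 2) P = 0 := by
          rw [heq.deriv_eq]; simp
        simp only [hgsrec 2 (by omega)]; rw [hder]; ring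
  have hSsub : ∀ P ∈ Set.Ioo (0:ℝ) (a/b), P ∈ S := fun P hP => hP.2
  refine ⟨?_, ?_⟩
  · intro P hP
    have hP' := hSsub P hP
    exact ⟨by rw [hgs1]; exact hgS P hP', hgs2 P hP', fun k hk => hgs0 k hk P hP'⟩
  · intro P hP i
    have hP' := hSsub P hP
    have hsum : ∑ k ∈ Finset.Icc 1 n, (∑ j, (A ^ (k - 1)) i j) * gs k P
        = ∑ k ∈ ({1, 2} : Finset ℕ), (∑ j, (A ^ (k - 1)) i j) * gs k P := by
      symm
      apply Finset.sum_subset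
      · intro k hk
        simp only [Finset.mem_insert, Finset.mem_singleton] at hk
        simp only [Finset.mem_Icc]
        omega
      · intro k hk hk'
        simp only [Finset.mem_Icc] at hk
        simp only [Finset.mem_insert, Finset.mem_singleton] at hk'
        have : 2 < k := by omega
        rw [hgs0 k this P hP', mul_zero]
    rw [hsum]
    rw [Finset.sum_pair (by norm_num : (1:ℕ) ≠ 2)]
    have h1 : (∑ j, (A ^ (1 - 1)) i j) = 1 := by
      simp [Matrix.one_apply]
    have h2 : (∑ j, (A ^ (2 - 1)) i j) = ∑ j, A i j := by norm_num
    rw [h1, h2, hgs1, hgS P hP', hgs2 P hP']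
    ring
end

section
/- In the two-firm sequential game with demand D(P) and g(P) = -D(P)/D'(P), zero costs: if firm 2 best-responds to the total price via p₂ = f₂(P) = g(P), and firm 1 maximizes (P - f₂(P))·D(P), then firm 1's first-order condition gives p₁ = f₁(P) = g(P)(1 - g'(P)), so the equilibrium total price satisfies P* = 2g(P*) - g'(P*)·g(P*). For logit demand D(P) = e^{-P}/(1 + e^{-P}), this means P* solves P = 2(1 + e^{-P}) + e^{-P}(1 + e^{-P}). -/
lemma logit_hasDeriv (P : ℝ) :
    HasDerivAt (fun P => Real.exp (-P) / (1 + Real.exp (-P)))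
      (-Real.exp (-P) / (1 + Real.exp (-P)) ^ 2) P := by
  have he : HasDerivAt (fun P : ℝ => Real.exp (-P)) (-Real.exp (-P)) P := by
    exact ((Real.hasDerivAt_exp (-P)).comp P (hasDerivAt_neg P)).congr_deriv (by ring)
  have hden : HasDerivAt (fun P : ℝ => 1 + Real.exp (-P)) (-Real.exp (-P)) P := by
    exact ((hasDerivAt_const P (1:ℝ)).add he).congr_deriv (by ring)
  have hne : (1 + Real.exp (-P)) ≠ 0 := by positivity
  have := he.div hden hne
  exact this.congr_deriv (by ring)

/-- Two-firm sequential game with zero costs. With demand D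
strictly decreasing, positive, differentiable and g(P) = -D(P)/D'(P):
(i) firm 2's FOC D(P) + p₂D'(P) = 0 gives p₂ = f₂(P) = g(P);
(ii) firm 1's FOC (1 - g'(P))D(P) + (P - g(P))D'(P) = 0 gives
p₁ = P - g(P) = g(P)(1 - g'(P)), so the equilibrium total price satisfies
P* = 2g(P*) - g'(P*)g(P*);
(iii) for logit demand D(P) = e^{-P}/(1 + e^{-P}) this equation reads
P = 2(1 + e^{-P}) + e^{-P}(1 + e^{-P}). -/
theorem two_firm_sequential
    (D g : ℝ → ℝ)
    (hdiff : Differentiable ℝ D)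
    (hD' : ∀ P : ℝ, deriv D P < 0)
    (hpos : ∀ P : ℝ, 0 < D P)
    (hg : g = fun P => -D P / deriv D P)
    (hgdiff : Differentiable ℝ g) :
    (∀ P p₂ : ℝ, D P + p₂ * deriv D P = 0 → p₂ = g P) ∧
    (∀ P p₁ : ℝ, (1 - deriv g P) * D P + (P - g P) * deriv D P = 0 →
      p₁ = P - g P →
      p₁ = g P * (1 - deriv g P) ∧ P = 2 * g P - deriv g P * g P) ∧
    ((D = fun P => Real.exp (-P) / (1 + Real.exp (-P))) →
      ∀ P : ℝ,
        (P = 2 * g P - deriv g P * g P ↔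
          P = 2 * (1 + Real.exp (-P)) + Real.exp (-P) * (1 + Real.exp (-P)))) := by
  have hD'ne : ∀ P, deriv D P ≠ 0 := fun P => (hD' P).ne
  refine ⟨?_, ?_, ?_⟩
  · intro P p₂ h
    have := hD'ne P
    subst hg
    field_simp
    linarith
  · intro P p₁ hfoc hp₁
    have hne := hD'ne P
    have hgd : g P * deriv D P = -D P := by
      rw [hg]; field_simp
    have hPg : P - g P = g P * (1 - deriv g P) := by
      apply mul_right_cancel₀ hne
      linear_combination hfoc - (1 - deriv g P) * hgd
    refine ⟨hp₁ ▸ hPg, by linarith [hPg]⟩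
  · intro hD P
    have hgexp : g = fun P => 1 + Real.exp (-P) := by
      funext Q
      have hd : deriv D Q = -Real.exp (-Q) / (1 + Real.exp (-Q)) ^ 2 := by
        rw [hD]; exact (logit_hasDeriv Q).deriv
      have h1 : (0:ℝ) < Real.exp (-Q) := Real.exp_pos _
      have h2 : (0:ℝ) < 1 + Real.exp (-Q) := by positivity
      rw [hg]
      show -D Q / deriv D Q = 1 + Real.exp (-Q)
      rw [hd]
      simp only [hD]
      field_simp
    have hderiv : deriv g P = -Real.exp (-P) := by
      rw [hgexp]
      have he : HasDerivAt (fun P : ℝ => 1 + Real.exp (-P)) (-Real.exp (-P)) P := by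
        exact ((hasDerivAt_const P (1:ℝ)).add
          ((Real.hasDerivAt_exp (-P)).comp P (hasDerivAt_neg P))).congr_deriv (by ring)
      exact he.deriv
    have e1 : g P = 1 + Real.exp (-P) := by rw [hgexp]
    rw [hderiv, e1]
    constructor <;> intro h <;> linarith [h]
end
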